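/- Let α : ℝ → ℝ be measurable with |α| ≤ M, supported in [−N, N], let σ² ≥ c > 0 on ℝ, and fix δ = c/(4M). Define the odd function γ by γ(u) = M u/δ on [0, δ], γ(u) = M on [δ, N], γ(u) = M(N + 1 − u) on [N, N+1], γ = 0 on [N+1, ∞), and γ(u) = −γ(−u) for u < 0 (where N ≥ δ). Then for almost every u ∈ ℝ: 2·((γ(u) − α(u))/σ(u)²)·u + 1 ≥ 1/2. -/

import Mathlib

open MeasureTheory

/-- With `α` bounded by `M`, supported in `[−N,N]`, `σ² ≥ c > 0`, `δ = c/(4M)`,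
and `γ` the odd piecewise-linear cutoff function of the construction, one has
`2((γ(u)−α(u))/σ(u)²)·u + 1 ≥ 1/2` for a.e. `u`. -/
theorem stmt7 (α σ γ : ℝ → ℝ) (M N c δ : ℝ) (hM : 0 < M) (hc : 0 < c)
    (hαm : Measurable α) (hαb : ∀ u, |α u| ≤ M) (hsupp : ∀ u : ℝ, N < |u| → α u = 0)
    (hσ : ∀ u, c ≤ σ u ^ 2)
    (hδ : δ = c / (4 * M)) (hδN : δ ≤ N)
    (hγ1 : ∀ u ∈ Set.Icc (0:ℝ) δ, γ u = M * u / δ)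
    (hγ2 : ∀ u ∈ Set.Icc δ N, γ u = M)
    (hγ3 : ∀ u ∈ Set.Icc N (N + 1), γ u = M * (N + 1 - u))
    (hγ4 : ∀ u : ℝ, N + 1 ≤ u → γ u = 0)
    (hγodd : ∀ u : ℝ, γ (-u) = -γ u) :
    ∀ᵐ u : ℝ ∂volume, 2 * ((γ u - α u) / σ u ^ 2) * u + 1 ≥ 1 / 2 := by
  have hδ0 : 0 < δ := by rw [hδ]; positivity
  have hMδ : M * δ = c / 4 := by rw [hδ]; field_simp
  -- helper: for v ≥ 0, |a| ≤ M, and a = 0 beyond N, we have -(c/4) ≤ (γ v + a) * v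
  have key : ∀ v a : ℝ, 0 ≤ v → |a| ≤ M → (N < v → a = 0) →
      -(c / 4) ≤ (γ v + a) * v := by
    intro v a hv ha h0
    have ha' := abs_le.mp ha
    rcases le_or_gt v δ with h1 | h1
    · have hγ := hγ1 v ⟨hv, h1⟩
      have h2 : 0 ≤ γ v * v := by
        rw [hγ]
        exact mul_nonneg (div_nonneg (mul_nonneg hM.le hv) hδ0.le) hv
      nlinarith [mul_nonneg (by linarith [ha'.1] : (0:ℝ) ≤ a + M) hv,
        mul_nonneg hM.le (by linarith : (0:ℝ) ≤ δ - v)]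
    · rcases le_or_gt v N with h2 | h2
      · have hγ := hγ2 v ⟨h1.le, h2⟩
        have h3 : 0 ≤ (γ v + a) * v :=
          mul_nonneg (by rw [hγ]; linarith [ha'.1]) hv
        linarith
      · have ha0 := h0 h2
        rcases le_or_gt v (N + 1) with h3 | h3
        · have hγ := hγ3 v ⟨h2.le, h3⟩
          have h4 : 0 ≤ (γ v + a) * v := by
            apply mul_nonneg _ hv
            rw [hγ, ha0]
            nlinarith [mul_nonneg hM.le (by linarith : (0:ℝ) ≤ N + 1 - v)]
          linarith
        · have hγ := hγ4 v h3.le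
          have h4 : (γ v + a) * v = 0 := by rw [hγ, ha0]; ring
          linarith
    -- end key
  refine Filter.Eventually.of_forall (fun u => ?_)
  have hs : c ≤ σ u ^ 2 := hσ u
  have hs0 : (0:ℝ) < σ u ^ 2 := lt_of_lt_of_le hc hs
  have keyu : -(c / 4) ≤ (γ u - α u) * u := by
    rcases le_or_gt 0 u with hu | hu
    · have h := key u (-α u) hu (by rw [abs_neg]; exact hαb u)
        (fun h => by rw [neg_eq_zero]; exact hsupp u (by rwa [abs_of_nonneg hu]))
      linarith [h, (by ring : (γ u + -α u) * u = (γ u - α u) * u)]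
    · have h := key (-u) (α u) (by linarith) (hαb u)
        (fun h => hsupp u (by rwa [abs_of_neg hu]))
      have ho := hγodd u
      nlinarith [h]
  have hdiv : -(1/4 : ℝ) ≤ (γ u - α u) * u / σ u ^ 2 := by
    rw [le_div_iff₀ hs0]
    nlinarith
  have heq : 2 * ((γ u - α u) / σ u ^ 2) * u + 1
      = 2 * ((γ u - α u) * u / σ u ^ 2) + 1 := by ring
  rw [ge_iff_le, heq]
  linarith
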